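/- Let K₁ > 0 be a constant satisfying Khintchine's inequality: for every n ∈ ℕ and all scalars a_1,...,a_n, 2^{-n} Σ_{δ ∈ {±1}^n} |Σ_{j=1}^n δ_j a_j| ≥ K₁ (Σ_{j=1}^n |a_j|²)^{1/2}. Let (x_j)_{j=1}^N and (f_j)_{j=1}^N be tight frames for an M-dimensional complex Hilbert space with ‖x_j‖ = ‖f_j‖ for all 1 ≤ j ≤ N, and let C > 0 be the least constant such that ‖Σ_{j=1}^N ε_j ⟨x, f_j⟩ x_j‖ ≤ C‖x‖ for all x in the space and all scalars ε_j with |ε_j| = 1. Then (x_j)_{j=1}^N and (f_j)_{j=1}^N have the same tight frame bound B = M^{-1} Σ_{j=1}^N ‖x_j‖², and C ≤ B ≤ (27/4) K₁^{-4} C. -/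

import Mathlib

open Complex Finset

noncomputable section TFAux

private def zeta : Fin 4 → ℂ := fun k => Complex.I ^ (k : ℕ)

private lemma zeta_mul_conj (k : Fin 4) : zeta k * (starRingEnd ℂ) (zeta k) = 1 := by
  have : ‖zeta k‖ = 1 := by simp [zeta]
  rw [Complex.mul_conj]
  norm_cast
  simp [Complex.normSq_eq_norm_sq, this]

private lemma conj_zeta (k : Fin 4) : (starRingEnd ℂ) (zeta k) = zeta k ^ 3 := by
  fin_cases k <;> simp [zeta, pow_succ, Complex.ext_iff]

private lemma sum_zeta_pow (c : ℕ) (hc : ¬ (4 ∣ c)) : ∑ k : Fin 4, zeta k ^ c = 0 := by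
  have hIc : (Complex.I ^ c) ^ 4 = 1 := by
    rw [← pow_mul, mul_comm, pow_mul, Complex.I_pow_four, one_pow]
  have hne : Complex.I ^ c ≠ 1 := by
    have h4 : c % 4 < 4 := Nat.mod_lt _ (by norm_num)
    have : Complex.I ^ c = Complex.I ^ (c % 4) := by
      conv_lhs => rw [← Nat.div_add_mod c 4]
      rw [pow_add, pow_mul, Complex.I_pow_four, one_pow, one_mul]
    rw [this]
    interval_cases h : c % 4 <;> simp_all [Complex.ext_iff, pow_succ] <;> norm_num
    omega
  have : ∑ k : Fin 4, zeta k ^ c = ∑ k ∈ Finset.range 4, (Complex.I ^ c) ^ k := by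
    rw [Finset.sum_range]
    refine Finset.sum_congr rfl fun k _ => ?_
    simp [zeta, ← pow_mul, mul_comm]
  rw [this, geom_sum_eq hne 4, hIc]
  simp

private lemma sum_factor {M : ℕ} (m : Fin M) (g : Fin 4 → ℂ) (h : (Fin M → Fin 4) → ℂ)
    (hh : ∀ ω k, h (Function.update ω m k) = h ω) :
    ∑ ω : Fin M → Fin 4, g (ω m) * h ω
      = ((∑ k : Fin 4, g k) / 4) * ∑ ω : Fin M → Fin 4, h ω := by
  classical
  set e := Equiv.funSplitAt m (Fin 4) with he
  have key : ∀ (k : Fin 4) (ρ : {j // j ≠ m} → Fin 4),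
      e.symm (k, ρ) = Function.update (e.symm (0, ρ)) m k := by
    intro k ρ; funext j
    by_cases hj : j = m
    · subst hj
      simp [e, Equiv.funSplitAt, Equiv.piSplitAt]
    · simp [e, Equiv.funSplitAt, Equiv.piSplitAt, hj, Function.update_of_ne hj]
  have hm : ∀ (k : Fin 4) (ρ : {j // j ≠ m} → Fin 4), (e.symm (k,ρ)) m = k := by
    intro k ρ; rw [key]; simp
  have h1 : ∀ (k : Fin 4) (ρ : {j // j ≠ m} → Fin 4),
      h (e.symm (k, ρ)) = h (e.symm (0, ρ)) := by
    intro k ρ; rw [key, hh]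
  have comp : ∀ (f : (Fin M → Fin 4) → ℂ),
      ∑ ω : Fin M → Fin 4, f ω = ∑ p : Fin 4 × ({j // j ≠ m} → Fin 4), f (e.symm p) :=
    fun f => (Equiv.sum_comp e.symm f).symm
  rw [comp (fun ω => g (ω m) * h ω), comp h]
  rw [Fintype.sum_prod_type, Fintype.sum_prod_type]
  have lhs : ∀ k : Fin 4, ∑ ρ : {j // j ≠ m} → Fin 4, g ((e.symm (k, ρ)) m) * h (e.symm (k, ρ))
      = g k * ∑ ρ : {j // j ≠ m} → Fin 4, h (e.symm (0, ρ)) := by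
    intro k
    rw [Finset.mul_sum]
    refine Finset.sum_congr rfl fun ρ _ => ?_
    rw [hm, h1]
  have rhs : ∀ k : Fin 4, ∑ ρ : {j // j ≠ m} → Fin 4, h (e.symm (k, ρ))
      = ∑ ρ : {j // j ≠ m} → Fin 4, h (e.symm (0, ρ)) := by
    intro k; exact Finset.sum_congr rfl fun ρ _ => h1 k ρ
  simp_rw [lhs, rhs]
  rw [← Finset.sum_mul]
  have : (4:ℂ) ≠ 0 := by norm_num
  field_simp
  simp only [Finset.sum_const, Finset.card_univ, Fintype.card_fin, nsmul_eq_mul]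
  push_cast
  ring

private lemma TT_kill {M : ℕ} (m : Fin M) (r t : ℕ) (hr : r ≤ 3) (ht : t ≤ 3) (hne : r ≠ t)
    (h : (Fin M → Fin 4) → ℂ) (hh : ∀ ω k, h (Function.update ω m k) = h ω) :
    ∑ ω : Fin M → Fin 4, ((starRingEnd ℂ) (zeta (ω m)))^r * (zeta (ω m))^t * h ω = 0 := by
  have e1 : ∀ k : Fin 4, ((starRingEnd ℂ) (zeta k))^r * (zeta k)^t = zeta k ^ (3*r + t) := by
    intro k; rw [conj_zeta, ← pow_mul, ← pow_add]
  have e2 : ∑ k : Fin 4, ((starRingEnd ℂ) (zeta k))^r * (zeta k)^t = 0 := by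
    simp_rw [e1]
    exact sum_zeta_pow _ (by omega)
  have := sum_factor m (fun k => ((starRingEnd ℂ) (zeta k))^r * (zeta k)^t) h hh
  simp_rw [mul_assoc] at this ⊢
  rw [this, e2]
  simp

private lemma TT_keep {M : ℕ} (m : Fin M) (r : ℕ) (h : (Fin M → Fin 4) → ℂ) :
    ∑ ω : Fin M → Fin 4, ((starRingEnd ℂ) (zeta (ω m)))^r * (zeta (ω m))^r * h ω
      = ∑ ω : Fin M → Fin 4, h ω := by
  refine Finset.sum_congr rfl fun ω _ => ?_
  rw [← mul_pow]
  rw [mul_comm ((starRingEnd ℂ) (zeta (ω m)))]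
  rw [zeta_mul_conj, one_pow, one_mul]


private def XF {M : ℕ} (F : Fin M → ℂ) (s : Finset (Fin M)) (ω : Fin M → Fin 4) : ℂ :=
  ∑ i ∈ s, (starRingEnd ℂ) (zeta (ω i)) * F i

private def YG {M : ℕ} (G : Fin M → ℂ) (s : Finset (Fin M)) (ω : Fin M → Fin 4) : ℂ :=
  ∑ i ∈ s, zeta (ω i) * G i

private lemma XF_update {M : ℕ} (F : Fin M → ℂ) (s : Finset (Fin M)) {m : Fin M} (hm : m ∉ s)
    (ω : Fin M → Fin 4) (k : Fin 4) : XF F s (Function.update ω m k) = XF F s ω := by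
  refine Finset.sum_congr rfl fun i hi => ?_
  have : i ≠ m := fun hik => hm (hik ▸ hi)
  rw [Function.update_of_ne this]

private lemma YG_update {M : ℕ} (G : Fin M → ℂ) (s : Finset (Fin M)) {m : Fin M} (hm : m ∉ s)
    (ω : Fin M → Fin 4) (k : Fin 4) : YG G s (Function.update ω m k) = YG G s ω := by
  refine Finset.sum_congr rfl fun i hi => ?_
  have : i ≠ m := fun hik => hm (hik ▸ hi)
  rw [Function.update_of_ne this]

private lemma XF_insert {M : ℕ} (F : Fin M → ℂ) (s : Finset (Fin M)) {m : Fin M} (hm : m ∉ s)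
    (ω : Fin M → Fin 4) :
    XF F (insert m s) ω = (starRingEnd ℂ) (zeta (ω m)) * F m + XF F s ω :=
  Finset.sum_insert hm

private lemma YG_insert {M : ℕ} (G : Fin M → ℂ) (s : Finset (Fin M)) {m : Fin M} (hm : m ∉ s)
    (ω : Fin M → Fin 4) :
    YG G (insert m s) ω = zeta (ω m) * G m + YG G s ω :=
  Finset.sum_insert hm

private lemma TT_one {M : ℕ} (c : ℂ) : ∑ _ω : Fin M → Fin 4, c = (4:ℂ)^M * c := by
  rw [Finset.sum_const]
  simp [Fintype.card_fun]

private lemma Phi1 {M : ℕ} (F G : Fin M → ℂ) (s : Finset (Fin M)) :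
    ∑ ω : Fin M → Fin 4, XF F s ω * YG G s ω = (4:ℂ)^M * ∑ i ∈ s, F i * G i := by
  classical
  induction s using Finset.induction_on with
  | empty => simp [XF, YG]
  | @insert m s hm IH =>
    have hpt : ∀ ω : Fin M → Fin 4, XF F (insert m s) ω * YG G (insert m s) ω
        = ((starRingEnd ℂ) (zeta (ω m)))^1 * (zeta (ω m))^1 * (F m * G m)
        + ((starRingEnd ℂ) (zeta (ω m)))^1 * (zeta (ω m))^0 * (F m * YG G s ω)
        + ((starRingEnd ℂ) (zeta (ω m)))^0 * (zeta (ω m))^1 * (G m * XF F s ω)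
        + XF F s ω * YG G s ω := by
      intro ω; rw [XF_insert F s hm, YG_insert G s hm]; ring
    have t1 : ∑ ω : Fin M → Fin 4,
        ((starRingEnd ℂ) (zeta (ω m)))^1 * (zeta (ω m))^1 * (F m * G m) = (4:ℂ)^M * (F m * G m) := by
      rw [TT_keep m 1 (fun _ω => F m * G m), TT_one]
    have t2 : ∑ ω : Fin M → Fin 4,
        ((starRingEnd ℂ) (zeta (ω m)))^1 * (zeta (ω m))^0 * (F m * YG G s ω) = 0 :=
      TT_kill m 1 0 (by norm_num) (by norm_num) (by norm_num) _
        (fun ω k => by rw [YG_update G s hm])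
    have t3 : ∑ ω : Fin M → Fin 4,
        ((starRingEnd ℂ) (zeta (ω m)))^0 * (zeta (ω m))^1 * (G m * XF F s ω) = 0 :=
      TT_kill m 0 1 (by norm_num) (by norm_num) (by norm_num) _
        (fun ω k => by rw [XF_update F s hm])
    calc ∑ ω : Fin M → Fin 4, XF F (insert m s) ω * YG G (insert m s) ω
        = ∑ ω : Fin M → Fin 4, (((starRingEnd ℂ) (zeta (ω m)))^1 * (zeta (ω m))^1 * (F m * G m)
          + ((starRingEnd ℂ) (zeta (ω m)))^1 * (zeta (ω m))^0 * (F m * YG G s ω)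
          + ((starRingEnd ℂ) (zeta (ω m)))^0 * (zeta (ω m))^1 * (G m * XF F s ω)
          + XF F s ω * YG G s ω) := Finset.sum_congr rfl (fun ω _ => hpt ω)
      _ = (4:ℂ)^M * (F m * G m) + 0 + 0 + (4:ℂ)^M * ∑ i ∈ s, F i * G i := by
          rw [Finset.sum_add_distrib, Finset.sum_add_distrib, Finset.sum_add_distrib,
            t1, t2, t3, IH]
      _ = (4:ℂ)^M * ∑ i ∈ insert m s, F i * G i := by
          rw [Finset.sum_insert hm]; ring


private lemma Phi2 {M : ℕ} (F1 F2 G1 G2 : Fin M → ℂ) (s : Finset (Fin M)) :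
    ∑ ω : Fin M → Fin 4, XF F1 s ω * XF F2 s ω * YG G1 s ω * YG G2 s ω
      = (4:ℂ)^M * ((∑ i ∈ s, F1 i * G1 i) * (∑ i ∈ s, F2 i * G2 i)
        + (∑ i ∈ s, F1 i * G2 i) * (∑ i ∈ s, F2 i * G1 i)
        - ∑ i ∈ s, F1 i * F2 i * G1 i * G2 i) := by
  classical
  induction s using Finset.induction_on with
  | empty => simp [XF, YG]
  | @insert m s hm IH =>
    have hpt : ∀ ω : Fin M → Fin 4,
        XF F1 (insert m s) ω * XF F2 (insert m s) ω * YG G1 (insert m s) ω * YG G2 (insert m s) ω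
        = ((starRingEnd ℂ) (zeta (ω m)))^2 * (zeta (ω m))^2 * (F1 m * F2 m * G1 m * G2 m)
        + ((starRingEnd ℂ) (zeta (ω m)))^1 * (zeta (ω m))^1
            * (F1 m * G1 m * (XF F2 s ω * YG G2 s ω))
        + ((starRingEnd ℂ) (zeta (ω m)))^1 * (zeta (ω m))^1
            * (F1 m * G2 m * (XF F2 s ω * YG G1 s ω))
        + ((starRingEnd ℂ) (zeta (ω m)))^1 * (zeta (ω m))^1
            * (F2 m * G1 m * (XF F1 s ω * YG G2 s ω))
        + ((starRingEnd ℂ) (zeta (ω m)))^1 * (zeta (ω m))^1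
            * (F2 m * G2 m * (XF F1 s ω * YG G1 s ω))
        + ((starRingEnd ℂ) (zeta (ω m)))^1 * (zeta (ω m))^0
            * (F1 m * (XF F2 s ω * YG G1 s ω * YG G2 s ω))
        + ((starRingEnd ℂ) (zeta (ω m)))^1 * (zeta (ω m))^0
            * (F2 m * (XF F1 s ω * YG G1 s ω * YG G2 s ω))
        + ((starRingEnd ℂ) (zeta (ω m)))^0 * (zeta (ω m))^1
            * (G1 m * (XF F1 s ω * XF F2 s ω * YG G2 s ω))
        + ((starRingEnd ℂ) (zeta (ω m)))^0 * (zeta (ω m))^1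
            * (G2 m * (XF F1 s ω * XF F2 s ω * YG G1 s ω))
        + ((starRingEnd ℂ) (zeta (ω m)))^2 * (zeta (ω m))^0
            * (F1 m * F2 m * (YG G1 s ω * YG G2 s ω))
        + ((starRingEnd ℂ) (zeta (ω m)))^0 * (zeta (ω m))^2
            * (G1 m * G2 m * (XF F1 s ω * XF F2 s ω))
        + ((starRingEnd ℂ) (zeta (ω m)))^2 * (zeta (ω m))^1
            * (F1 m * F2 m * G1 m * YG G2 s ω)
        + ((starRingEnd ℂ) (zeta (ω m)))^2 * (zeta (ω m))^1
            * (F1 m * F2 m * G2 m * YG G1 s ω)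
        + ((starRingEnd ℂ) (zeta (ω m)))^1 * (zeta (ω m))^2
            * (F1 m * G1 m * G2 m * XF F2 s ω)
        + ((starRingEnd ℂ) (zeta (ω m)))^1 * (zeta (ω m))^2
            * (F2 m * G1 m * G2 m * XF F1 s ω)
        + XF F1 s ω * XF F2 s ω * YG G1 s ω * YG G2 s ω := by
      intro ω
      rw [XF_insert F1 s hm, XF_insert F2 s hm, YG_insert G1 s hm, YG_insert G2 s hm]
      ring
    rw [Finset.sum_congr rfl (fun ω _ => hpt ω)]
    rw [Finset.sum_add_distrib, Finset.sum_add_distrib, Finset.sum_add_distrib,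
      Finset.sum_add_distrib, Finset.sum_add_distrib, Finset.sum_add_distrib,
      Finset.sum_add_distrib, Finset.sum_add_distrib, Finset.sum_add_distrib,
      Finset.sum_add_distrib, Finset.sum_add_distrib, Finset.sum_add_distrib,
      Finset.sum_add_distrib, Finset.sum_add_distrib, Finset.sum_add_distrib]
    rw [TT_keep m 2, TT_keep m 1, TT_keep m 1, TT_keep m 1, TT_keep m 1]
    rw [TT_kill m 1 0 (by norm_num) (by norm_num) (by norm_num) _
        (fun ω k => by rw [XF_update F2 s hm, YG_update G1 s hm, YG_update G2 s hm]),
      TT_kill m 1 0 (by norm_num) (by norm_num) (by norm_num) _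
        (fun ω k => by rw [XF_update F1 s hm, YG_update G1 s hm, YG_update G2 s hm]),
      TT_kill m 0 1 (by norm_num) (by norm_num) (by norm_num) _
        (fun ω k => by rw [XF_update F1 s hm, XF_update F2 s hm, YG_update G2 s hm]),
      TT_kill m 0 1 (by norm_num) (by norm_num) (by norm_num) _
        (fun ω k => by rw [XF_update F1 s hm, XF_update F2 s hm, YG_update G1 s hm]),
      TT_kill m 2 0 (by norm_num) (by norm_num) (by norm_num) _
        (fun ω k => by rw [YG_update G1 s hm, YG_update G2 s hm]),
      TT_kill m 0 2 (by norm_num) (by norm_num) (by norm_num) _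
        (fun ω k => by rw [XF_update F1 s hm, XF_update F2 s hm]),
      TT_kill m 2 1 (by norm_num) (by norm_num) (by norm_num) _
        (fun ω k => by rw [YG_update G2 s hm]),
      TT_kill m 2 1 (by norm_num) (by norm_num) (by norm_num) _
        (fun ω k => by rw [YG_update G1 s hm]),
      TT_kill m 1 2 (by norm_num) (by norm_num) (by norm_num) _
        (fun ω k => by rw [XF_update F2 s hm]),
      TT_kill m 1 2 (by norm_num) (by norm_num) (by norm_num) _
        (fun ω k => by rw [XF_update F1 s hm])]
    have e1 : ∀ (c1 c2 : ℂ) (P Q : (Fin M → Fin 4) → ℂ) (v : ℂ),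
        (∑ ω : Fin M → Fin 4, P ω * Q ω) = v →
        ∑ ω : Fin M → Fin 4, c1 * c2 * (P ω * Q ω) = c1 * c2 * v := by
      intro c1 c2 P Q v hv
      rw [← hv, Finset.mul_sum]
    rw [TT_one, e1 (F1 m) (G1 m) _ _ _ (Phi1 F2 G2 s), e1 (F1 m) (G2 m) _ _ _ (Phi1 F2 G1 s),
      e1 (F2 m) (G1 m) _ _ _ (Phi1 F1 G2 s), e1 (F2 m) (G2 m) _ _ _ (Phi1 F1 G1 s), IH]
    rw [Finset.sum_insert hm, Finset.sum_insert hm, Finset.sum_insert hm,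
      Finset.sum_insert hm, Finset.sum_insert hm]
    ring

private lemma Phi3 {M : ℕ} (F G : Fin M → ℂ) (s : Finset (Fin M)) :
    ∑ ω : Fin M → Fin 4, (XF F s ω * YG G s ω)^3
      = (4:ℂ)^M * (6 * (∑ i ∈ s, F i * G i)^3
        - 9 * (∑ i ∈ s, F i * G i) * (∑ i ∈ s, (F i * G i)^2)
        + 4 * ∑ i ∈ s, (F i * G i)^3) := by
  classical
  induction s using Finset.induction_on with
  | empty => simp [XF, YG]
  | @insert m s hm IH =>
    have hpt : ∀ ω : Fin M → Fin 4,
        (XF F (insert m s) ω * YG G (insert m s) ω)^3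
        = ((starRingEnd ℂ) (zeta (ω m)))^3 * (zeta (ω m))^3 * ((F m)^3 * (G m)^3)
        + ((starRingEnd ℂ) (zeta (ω m)))^2 * (zeta (ω m))^2
            * (9 * (F m)^2 * (G m)^2 * (XF F s ω * YG G s ω))
        + ((starRingEnd ℂ) (zeta (ω m)))^1 * (zeta (ω m))^1
            * (9 * F m * G m * (XF F s ω * XF F s ω * YG G s ω * YG G s ω))
        + ((starRingEnd ℂ) (zeta (ω m)))^3 * (zeta (ω m))^0 * ((F m)^3 * (YG G s ω)^3)
        + ((starRingEnd ℂ) (zeta (ω m)))^0 * (zeta (ω m))^3 * ((G m)^3 * (XF F s ω)^3)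
        + ((starRingEnd ℂ) (zeta (ω m)))^3 * (zeta (ω m))^2
            * (3 * (F m)^3 * (G m)^2 * YG G s ω)
        + ((starRingEnd ℂ) (zeta (ω m)))^2 * (zeta (ω m))^3
            * (3 * (F m)^2 * (G m)^3 * XF F s ω)
        + ((starRingEnd ℂ) (zeta (ω m)))^3 * (zeta (ω m))^1
            * (3 * (F m)^3 * G m * (YG G s ω)^2)
        + ((starRingEnd ℂ) (zeta (ω m)))^1 * (zeta (ω m))^3
            * (3 * F m * (G m)^3 * (XF F s ω)^2)
        + ((starRingEnd ℂ) (zeta (ω m)))^2 * (zeta (ω m))^1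
            * (9 * (F m)^2 * G m * (XF F s ω * (YG G s ω)^2))
        + ((starRingEnd ℂ) (zeta (ω m)))^1 * (zeta (ω m))^2
            * (9 * F m * (G m)^2 * ((XF F s ω)^2 * YG G s ω))
        + ((starRingEnd ℂ) (zeta (ω m)))^2 * (zeta (ω m))^0
            * (3 * (F m)^2 * (XF F s ω * (YG G s ω)^3))
        + ((starRingEnd ℂ) (zeta (ω m)))^0 * (zeta (ω m))^2
            * (3 * (G m)^2 * ((XF F s ω)^3 * YG G s ω))
        + ((starRingEnd ℂ) (zeta (ω m)))^1 * (zeta (ω m))^0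
            * (3 * F m * ((XF F s ω)^2 * (YG G s ω)^3))
        + ((starRingEnd ℂ) (zeta (ω m)))^0 * (zeta (ω m))^1
            * (3 * G m * ((XF F s ω)^3 * (YG G s ω)^2))
        + (XF F s ω * YG G s ω)^3 := by
      intro ω
      rw [XF_insert F s hm, YG_insert G s hm]
      ring
    rw [Finset.sum_congr rfl (fun ω _ => hpt ω)]
    rw [Finset.sum_add_distrib, Finset.sum_add_distrib, Finset.sum_add_distrib,
      Finset.sum_add_distrib, Finset.sum_add_distrib, Finset.sum_add_distrib,
      Finset.sum_add_distrib, Finset.sum_add_distrib, Finset.sum_add_distrib,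
      Finset.sum_add_distrib, Finset.sum_add_distrib, Finset.sum_add_distrib,
      Finset.sum_add_distrib, Finset.sum_add_distrib, Finset.sum_add_distrib]
    rw [TT_keep m 3, TT_keep m 2, TT_keep m 1]
    rw [TT_kill m 3 0 (by norm_num) (by norm_num) (by norm_num) _
        (fun ω k => by rw [YG_update G s hm]),
      TT_kill m 0 3 (by norm_num) (by norm_num) (by norm_num) _
        (fun ω k => by rw [XF_update F s hm]),
      TT_kill m 3 2 (by norm_num) (by norm_num) (by norm_num) _
        (fun ω k => by rw [YG_update G s hm]),
      TT_kill m 2 3 (by norm_num) (by norm_num) (by norm_num) _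
        (fun ω k => by rw [XF_update F s hm]),
      TT_kill m 3 1 (by norm_num) (by norm_num) (by norm_num) _
        (fun ω k => by rw [YG_update G s hm]),
      TT_kill m 1 3 (by norm_num) (by norm_num) (by norm_num) _
        (fun ω k => by rw [XF_update F s hm]),
      TT_kill m 2 1 (by norm_num) (by norm_num) (by norm_num) _
        (fun ω k => by rw [XF_update F s hm, YG_update G s hm]),
      TT_kill m 1 2 (by norm_num) (by norm_num) (by norm_num) _
        (fun ω k => by rw [XF_update F s hm, YG_update G s hm]),
      TT_kill m 2 0 (by norm_num) (by norm_num) (by norm_num) _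
        (fun ω k => by rw [XF_update F s hm, YG_update G s hm]),
      TT_kill m 0 2 (by norm_num) (by norm_num) (by norm_num) _
        (fun ω k => by rw [XF_update F s hm, YG_update G s hm]),
      TT_kill m 1 0 (by norm_num) (by norm_num) (by norm_num) _
        (fun ω k => by rw [XF_update F s hm, YG_update G s hm]),
      TT_kill m 0 1 (by norm_num) (by norm_num) (by norm_num) _
        (fun ω k => by rw [XF_update F s hm, YG_update G s hm])]
    have e2 : ∀ (c1 : ℂ) (P : (Fin M → Fin 4) → ℂ) (v : ℂ),
        (∑ ω : Fin M → Fin 4, P ω) = v →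
        ∑ ω : Fin M → Fin 4, c1 * P ω = c1 * v := by
      intro c1 P v hv
      rw [← hv, Finset.mul_sum]
    rw [TT_one, e2 _ _ _ (Phi1 F G s), e2 _ _ _ (Phi2 F F G G s), IH]
    rw [Finset.sum_insert hm, Finset.sum_insert hm, Finset.sum_insert hm]
    have hd : ∑ i ∈ s, F i * F i * G i * G i = ∑ i ∈ s, (F i * G i)^2 :=
      Finset.sum_congr rfl (fun i _ => by ring)
    rw [hd]
    ring

private lemma zlem {ι : Type*} (s : Finset ι) (z : ι → ℂ) :
    ∑ i ∈ s, ‖z i‖^2 ≤ (∑ i ∈ s, ‖z i‖)^2/2 + ‖∑ i ∈ s, z i‖^2 := by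
  classical
  rcases s.eq_empty_or_nonempty with rfl | hne
  · simp
  obtain ⟨i₀, hi₀, hmax⟩ := s.exists_max_image (fun i => ‖z i‖) hne
  set x := ‖z i₀‖ with hx
  set R := ∑ i ∈ s.erase i₀, ‖z i‖ with hR
  have hxnn : 0 ≤ x := norm_nonneg _
  have hRnn : 0 ≤ R := Finset.sum_nonneg (fun i _ => norm_nonneg _)
  have hsplit : ∑ i ∈ s, ‖z i‖ = x + R := by
    rw [hR, hx, ← Finset.add_sum_erase s _ hi₀]
  have hsplit2 : ∑ i ∈ s, ‖z i‖^2 = x^2 + ∑ i ∈ s.erase i₀, ‖z i‖^2 := by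
    rw [← Finset.add_sum_erase s _ hi₀]
  have herase : ∑ i ∈ s.erase i₀, ‖z i‖^2 ≤ R * R := by
    have hh : ∀ i ∈ s.erase i₀, ‖z i‖^2 ≤ ‖z i‖ * R := by
      intro i hi
      have h1 : ‖z i‖ ≤ R := Finset.single_le_sum (fun j _ => norm_nonneg (z j)) hi
      have := norm_nonneg (z i)
      nlinarith
    calc ∑ i ∈ s.erase i₀, ‖z i‖^2 ≤ ∑ i ∈ s.erase i₀, ‖z i‖ * R :=
          Finset.sum_le_sum hh
      _ = R * R := by rw [← Finset.sum_mul]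
  by_cases hcase : x ≤ (x + R)/2
  · have hstep : ∑ i ∈ s, ‖z i‖^2 ≤ x * (x + R) := by
      have h2 : ∑ i ∈ s, ‖z i‖^2 ≤ ∑ i ∈ s, x * ‖z i‖ := by
        refine Finset.sum_le_sum (fun i hi => ?_)
        have h3 := hmax i hi
        have h4 := norm_nonneg (z i)
        nlinarith
      rw [← Finset.mul_sum, hsplit] at h2
      exact h2
    nlinarith [sq_nonneg (‖∑ i ∈ s, z i‖), hsplit]
  · push_neg at hcase
    have hxR : R < x := by linarith
    have hlow : x - R ≤ ‖∑ i ∈ s, z i‖ := by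
      have h1 : ∑ i ∈ s, z i = z i₀ + ∑ i ∈ s.erase i₀, z i := by
        rw [← Finset.add_sum_erase s _ hi₀]
      have h2 : ‖∑ i ∈ s.erase i₀, z i‖ ≤ R := norm_sum_le _ _
      have h3 : x ≤ ‖z i₀ + ∑ i ∈ s.erase i₀, z i‖ + ‖∑ i ∈ s.erase i₀, z i‖ := by
        have h4 := norm_sub_le (z i₀ + ∑ i ∈ s.erase i₀, z i) (∑ i ∈ s.erase i₀, z i)
        simpa using h4
      rw [h1]
      linarith
    have hsq : (x - R)^2 ≤ ‖∑ i ∈ s, z i‖^2 := by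
      have h0 : 0 ≤ x - R := by linarith
      nlinarith [norm_nonneg (∑ i ∈ s, z i)]
    rw [hsplit, hsplit2]
    nlinarith

private lemma conj_XF {M : ℕ} (F : Fin M → ℂ) (s : Finset (Fin M)) (ω : Fin M → Fin 4) :
    (starRingEnd ℂ) (XF F s ω) = YG (fun i => (starRingEnd ℂ) (F i)) s ω := by
  rw [XF, YG, map_sum]
  refine Finset.sum_congr rfl fun i _ => ?_
  rw [map_mul, Complex.conj_conj]

private lemma conj_YG {M : ℕ} (G : Fin M → ℂ) (s : Finset (Fin M)) (ω : Fin M → Fin 4) :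
    (starRingEnd ℂ) (YG G s ω) = XF (fun i => (starRingEnd ℂ) (G i)) s ω := by
  rw [XF, YG, map_sum]
  refine Finset.sum_congr rfl fun i _ => ?_
  rw [map_mul]

private lemma mul_conj_norm_sq (z : ℂ) : z * (starRingEnd ℂ) z = ((‖z‖^2 : ℝ) : ℂ) := by
  rw [Complex.mul_conj]
  norm_cast
  rw [Complex.normSq_eq_norm_sq]

private lemma m6_bound {M : ℕ} (F : Fin M → ℂ) :
    ∑ ω : Fin M → Fin 4, ‖XF F Finset.univ ω‖^6
      ≤ 6 * (4:ℝ)^M * (∑ i, ‖F i‖^2)^3 := by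
  classical
  set a : ℝ := ∑ i, ‖F i‖^2 with ha
  set β : ℝ := ∑ i, ‖F i‖^4 with hβ
  set γ : ℝ := ∑ i, ‖F i‖^6 with hγ
  have hC : ((∑ ω : Fin M → Fin 4, ‖XF F Finset.univ ω‖^6 : ℝ) : ℂ)
      = ((4:ℝ)^M * (6*a^3 - 9*a*β + 4*γ) : ℝ) := by
    have hpt : ∀ ω : Fin M → Fin 4,
        ((‖XF F Finset.univ ω‖^6 : ℝ) : ℂ)
          = (XF F Finset.univ ω * YG (fun i => (starRingEnd ℂ) (F i)) Finset.univ ω)^3 := by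
      intro ω
      rw [← conj_XF, mul_conj_norm_sq]
      norm_cast
      ring
    rw [Complex.ofReal_sum, Finset.sum_congr rfl (fun ω _ => hpt ω), Phi3]
    have e1 : ∑ i : Fin M, F i * (starRingEnd ℂ) (F i) = ((a:ℝ):ℂ) := by
      rw [ha, Complex.ofReal_sum]
      exact Finset.sum_congr rfl fun i _ => mul_conj_norm_sq (F i)
    have e2 : ∑ i : Fin M, (F i * (starRingEnd ℂ) (F i))^2 = ((β:ℝ):ℂ) := by
      rw [hβ, Complex.ofReal_sum]
      refine Finset.sum_congr rfl fun i _ => ?_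
      rw [mul_conj_norm_sq]
      norm_cast
      ring
    have e3 : ∑ i : Fin M, (F i * (starRingEnd ℂ) (F i))^3 = ((γ:ℝ):ℂ) := by
      rw [hγ, Complex.ofReal_sum]
      refine Finset.sum_congr rfl fun i _ => ?_
      rw [mul_conj_norm_sq]
      norm_cast
      ring
    rw [e1, e2, e3]
    push_cast
    ring
  have hreal : ∑ ω : Fin M → Fin 4, ‖XF F Finset.univ ω‖^6
      = (4:ℝ)^M * (6*a^3 - 9*a*β + 4*γ) := by exact_mod_cast hC
  rw [hreal]
  have hβnn : 0 ≤ β := Finset.sum_nonneg fun i _ => by positivity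
  have hann : 0 ≤ a := Finset.sum_nonneg fun i _ => by positivity
  have hγβ : γ ≤ a * β := by
    rw [hγ, Finset.mul_sum]
    refine Finset.sum_le_sum fun i _ => ?_
    have h1 : ‖F i‖^2 ≤ a := by
      rw [ha]
      exact Finset.single_le_sum (f := fun j => ‖F j‖^2) (fun j _ => by positivity)
        (Finset.mem_univ i)
    have h2 : (0:ℝ) ≤ ‖F i‖^4 := by positivity
    calc ‖F i‖^6 = ‖F i‖^2 * ‖F i‖^4 := by ring
      _ ≤ a * ‖F i‖^4 := by nlinarith
  have h4 : (0:ℝ) < (4:ℝ)^M := by positivity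
  nlinarith [mul_nonneg hann hβnn]

private lemma key_anti {M : ℕ} (F1 F2 : Fin M → ℂ) (nf nx : ℝ)
    (hnf : 0 ≤ nf) (hnx : 0 ≤ nx)
    (ha : ∑ i, ‖F1 i‖^2 = nf^2) (hb : ∑ i, ‖F2 i‖^2 = nx^2) :
    (4:ℝ)^M * (nf * nx) / 24
      ≤ ∑ ω : Fin M → Fin 4, ‖XF F1 Finset.univ ω‖ * ‖XF F2 Finset.univ ω‖ := by
  classical
  set G : Fin M → ℂ := fun i => (starRingEnd ℂ) (F2 i) with hG
  set cF1 : Fin M → ℂ := fun i => (starRingEnd ℂ) (F1 i) with hcF1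
  have hYX : ∀ ω : Fin M → Fin 4, ‖YG G Finset.univ ω‖ = ‖XF F2 Finset.univ ω‖ := by
    intro ω
    have h1 : (starRingEnd ℂ) (YG G Finset.univ ω) = XF F2 Finset.univ ω := by
      rw [conj_YG]
      congr 1
      funext i
      rw [hG, Complex.conj_conj]
    rw [← h1, RCLike.norm_conj]
  -- real moment quantities
  set Q : (Fin M → Fin 4) → ℂ := fun ω => XF F1 Finset.univ ω * YG G Finset.univ ω with hQ
  set m1 : ℝ := ∑ ω : Fin M → Fin 4, ‖Q ω‖ with hm1
  set m2 : ℝ := ∑ ω : Fin M → Fin 4, ‖Q ω‖^2 with hm2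
  set m3 : ℝ := ∑ ω : Fin M → Fin 4, ‖Q ω‖^3 with hm3
  set t : ℂ := ∑ i : Fin M, F1 i * G i with ht
  set D : ℝ := ∑ i : Fin M, ‖F1 i‖^2 * ‖F2 i‖^2 with hD
  -- second moment identity
  have hm2eq : m2 = (4:ℝ)^M * (nf^2 * nx^2 + ‖t‖^2 - D) := by
    have hC : ((m2 : ℝ) : ℂ) = (((4:ℝ)^M * (nf^2 * nx^2 + ‖t‖^2 - D) : ℝ) : ℂ) := by
      have hpt : ∀ ω : Fin M → Fin 4, ((‖Q ω‖^2 : ℝ) : ℂ)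
          = XF F1 Finset.univ ω * XF F2 Finset.univ ω
            * YG G Finset.univ ω * YG cF1 Finset.univ ω := by
        intro ω
        rw [← mul_conj_norm_sq (Q ω), hQ]
        simp only []
        rw [map_mul, conj_XF, conj_YG]
        have h2 : (fun i => (starRingEnd ℂ) (G i)) = F2 := by
          funext i; rw [hG, Complex.conj_conj]
        rw [h2]
        rw [← hcF1]
        ring
      rw [hm2, Complex.ofReal_sum, Finset.sum_congr rfl (fun ω _ => hpt ω), Phi2]
      have e1 : ∑ i : Fin M, F1 i * cF1 i = ((nf^2 : ℝ) : ℂ) := by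
        rw [← ha, Complex.ofReal_sum]
        exact Finset.sum_congr rfl fun i _ => mul_conj_norm_sq (F1 i)
      have e2 : ∑ i : Fin M, F2 i * G i = ((nx^2 : ℝ) : ℂ) := by
        rw [← hb, Complex.ofReal_sum]
        exact Finset.sum_congr rfl fun i _ => mul_conj_norm_sq (F2 i)
      have e3 : ∑ i : Fin M, F2 i * cF1 i = (starRingEnd ℂ) t := by
        rw [ht, map_sum]
        refine Finset.sum_congr rfl fun i _ => ?_
        rw [map_mul, hG, hcF1, Complex.conj_conj]
        ring
      have e4 : ∑ i : Fin M, F1 i * F2 i * G i * cF1 i = ((D : ℝ) : ℂ) := by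
        rw [hD, Complex.ofReal_sum]
        refine Finset.sum_congr rfl fun i _ => ?_
        rw [Complex.ofReal_mul, ← mul_conj_norm_sq (F1 i), ← mul_conj_norm_sq (F2 i)]
        simp only [hG, hcF1]
        ring
      rw [e1, e2, e3, e4]
      have e5 : t * (starRingEnd ℂ) t = ((‖t‖^2 : ℝ) : ℂ) := mul_conj_norm_sq t
      rw [e5]
      push_cast
      ring
    exact_mod_cast hC
  -- lower bound on m2
  have hm2low : (4:ℝ)^M * (nf^2 * nx^2) / 2 ≤ m2 := by
    have hz := zlem Finset.univ (fun i => F1 i * G i)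
    have hz1 : ∑ i : Fin M, ‖F1 i * G i‖^2 = D := by
      rw [hD]
      refine Finset.sum_congr rfl fun i _ => ?_
      rw [norm_mul, hG, RCLike.norm_conj]
      ring
    have hz2 : (∑ i : Fin M, ‖F1 i * G i‖)^2 ≤ nf^2 * nx^2 := by
      have hcs := Finset.sum_mul_sq_le_sq_mul_sq Finset.univ
        (fun i => ‖F1 i‖) (fun i => ‖F2 i‖)
      rw [ha, hb] at hcs
      have : ∑ i : Fin M, ‖F1 i * G i‖ = ∑ i : Fin M, ‖F1 i‖ * ‖F2 i‖ := by
        refine Finset.sum_congr rfl fun i _ => ?_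
        rw [norm_mul, hG, RCLike.norm_conj]
      rw [this]
      exact hcs
    have hz3 : ‖∑ i : Fin M, F1 i * G i‖^2 = ‖t‖^2 := by rw [ht]
    have h4 : (0:ℝ) < (4:ℝ)^M := by positivity
    rw [hz3] at hz
    rw [hm2eq]
    nlinarith
  -- third moment upper bound
  have hm3up : m3 ≤ 6 * (4:ℝ)^M * (nf * nx)^3 := by
    have hcs := Finset.sum_mul_sq_le_sq_mul_sq Finset.univ
      (fun ω : Fin M → Fin 4 => ‖XF F1 Finset.univ ω‖^3)
      (fun ω : Fin M → Fin 4 => ‖XF F2 Finset.univ ω‖^3)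
    have hpt : ∀ ω : Fin M → Fin 4,
        ‖XF F1 Finset.univ ω‖^3 * ‖XF F2 Finset.univ ω‖^3 = ‖Q ω‖^3 := by
      intro ω
      rw [hQ]
      simp only []
      rw [norm_mul, hYX, mul_pow]
    have h6a := m6_bound F1
    have h6b := m6_bound F2
    rw [ha] at h6a
    rw [hb] at h6b
    have hsq : m3^2 ≤ (6 * (4:ℝ)^M * (nf*nx)^3)^2 := by
      have hl : ∑ ω : Fin M → Fin 4, ‖XF F1 Finset.univ ω‖^3 * ‖XF F2 Finset.univ ω‖^3 = m3 := by
        rw [hm3]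
        exact Finset.sum_congr rfl fun ω _ => hpt ω
      have hc1 : ∀ ω : Fin M → Fin 4, (‖XF F1 Finset.univ ω‖^3)^2 = ‖XF F1 Finset.univ ω‖^6 := by
        intro ω; ring
      have hc2 : ∀ ω : Fin M → Fin 4, (‖XF F2 Finset.univ ω‖^3)^2 = ‖XF F2 Finset.univ ω‖^6 := by
        intro ω; ring
      rw [hl] at hcs
      simp_rw [hc1, hc2] at hcs
      have h4 : (0:ℝ) < (4:ℝ)^M := by positivity
      have hm6f0 : 0 ≤ ∑ ω : Fin M → Fin 4, ‖XF F1 Finset.univ ω‖^6 :=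
        Finset.sum_nonneg fun ω _ => by positivity
      have hm6g0 : 0 ≤ ∑ ω : Fin M → Fin 4, ‖XF F2 Finset.univ ω‖^6 :=
        Finset.sum_nonneg fun ω _ => by positivity
      calc m3^2 ≤ (∑ ω : Fin M → Fin 4, ‖XF F1 Finset.univ ω‖^6)
            * (∑ ω : Fin M → Fin 4, ‖XF F2 Finset.univ ω‖^6) := hcs
        _ ≤ (6 * (4:ℝ)^M * ((nf^2)^3)) * (6 * (4:ℝ)^M * ((nx^2)^3)) := by
            apply mul_le_mul h6a h6b hm6g0 (by positivity)
        _ = (6 * (4:ℝ)^M * (nf*nx)^3)^2 := by ring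
    have hm30 : 0 ≤ m3 := Finset.sum_nonneg fun ω _ => by positivity
    have hK0 : (0:ℝ) ≤ 6 * (4:ℝ)^M * (nf*nx)^3 := by positivity
    nlinarith [hm30, hK0, hsq]
  -- Cauchy-Schwarz: m2^2 ≤ m1 * m3
  have hCS : m2^2 ≤ m1 * m3 := by
    have hcs := Finset.sum_mul_sq_le_sq_mul_sq Finset.univ
      (fun ω : Fin M → Fin 4 => Real.sqrt (‖Q ω‖))
      (fun ω : Fin M → Fin 4 => Real.sqrt (‖Q ω‖^3))
    have hpt : ∀ ω : Fin M → Fin 4,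
        Real.sqrt (‖Q ω‖) * Real.sqrt (‖Q ω‖^3) = ‖Q ω‖^2 := by
      intro ω
      rw [← Real.sqrt_mul (norm_nonneg _)]
      have : ‖Q ω‖ * ‖Q ω‖^3 = (‖Q ω‖^2)^2 := by ring
      rw [this, Real.sqrt_sq (by positivity)]
    have hp1 : ∀ ω : Fin M → Fin 4, Real.sqrt (‖Q ω‖)^2 = ‖Q ω‖ := by
      intro ω; exact Real.sq_sqrt (norm_nonneg _)
    have hp2 : ∀ ω : Fin M → Fin 4, Real.sqrt (‖Q ω‖^3)^2 = ‖Q ω‖^3 := by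
      intro ω; exact Real.sq_sqrt (by positivity)
    simp_rw [hpt, hp1, hp2] at hcs
    rw [← hm2, ← hm1, ← hm3] at hcs
    exact hcs
  -- conclude
  have hm1Q : m1 = ∑ ω : Fin M → Fin 4, ‖XF F1 Finset.univ ω‖ * ‖XF F2 Finset.univ ω‖ := by
    rw [hm1]
    refine Finset.sum_congr rfl fun ω _ => ?_
    rw [hQ]
    simp only []
    rw [norm_mul, hYX]
  have hm10 : 0 ≤ m1 := by
    rw [hm1]; exact Finset.sum_nonneg fun ω _ => norm_nonneg _
  clear_value Q m1 m2 m3 t D G cF1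
  rw [← hm1Q]
  have h4 : (0:ℝ) < (4:ℝ)^M := by positivity
  rcases eq_or_lt_of_le (mul_nonneg hnf hnx) with hzero | hpos
  · rw [← hzero]
    simpa using hm10
  · -- nf*nx > 0
    have hden : (0:ℝ) < 6*(4:ℝ)^M*(nf*nx)^3 := by positivity
    have hkey : ((4:ℝ)^M * (nf^2*nx^2)/2)^2 ≤ m1 * (6 * (4:ℝ)^M * (nf*nx)^3) := by
      calc ((4:ℝ)^M * (nf^2*nx^2)/2)^2 ≤ m2^2 := by
            have hm20 : 0 ≤ (4:ℝ)^M * (nf^2*nx^2)/2 := by positivity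
            nlinarith [hm2low]
        _ ≤ m1 * m3 := hCS
        _ ≤ m1 * (6 * (4:ℝ)^M * (nf*nx)^3) := mul_le_mul_of_nonneg_left hm3up hm10
    have h5 : (4:ℝ)^M * (nf*nx)/24 * (6*(4:ℝ)^M*(nf*nx)^3)
        ≤ m1 * (6*(4:ℝ)^M*(nf*nx)^3) := by
      calc (4:ℝ)^M * (nf*nx)/24 * (6*(4:ℝ)^M*(nf*nx)^3)
          = ((4:ℝ)^M * (nf^2*nx^2)/2)^2 := by ring
        _ ≤ m1 * (6*(4:ℝ)^M*(nf*nx)^3) := hkey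
    exact le_of_mul_le_mul_right h5 hden
end TFAux




open scoped ComplexInnerProductSpace

/-- Corollary: if `(xⱼ)` and `(fⱼ)` are tight frames for an `M`-dimensional complex Hilbert
space with `‖xⱼ‖ = ‖fⱼ‖` for all `j`, and `C > 0` is the least constant for the
unconditional multiplier bound, then both tight frames have the same frame bound
`B = M⁻¹ ∑ ‖xⱼ‖²` and `C ≤ B ≤ (27/4) K₁⁻⁴ C`, where `K₁ > 0` is any constant satisfying
Khintchine's inequality. -/
theorem tight_frame_pair_bound
    {H : Type*} [NormedAddCommGroup H] [InnerProductSpace ℂ H] [FiniteDimensional ℂ H]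
    (K₁ : ℝ) (hK₁ : 0 < K₁)
    (hK : ∀ (n : ℕ) (a : Fin n → ℂ),
      K₁ * Real.sqrt (∑ j, ‖a j‖ ^ 2) ≤
        ((2 : ℝ) ^ n)⁻¹ * ∑ δ : Fin n → Bool, ‖∑ j, (if δ j then (1 : ℂ) else -1) * a j‖)
    (N M : ℕ) (hdim : Module.finrank ℂ H = M)
    (x f : Fin N → H)
    (hxtight : ∃ A : ℝ, 0 < A ∧ ∀ v : H, ∑ j, ‖⟪v, x j⟫‖ ^ 2 = A * ‖v‖ ^ 2)
    (hftight : ∃ A : ℝ, 0 < A ∧ ∀ v : H, ∑ j, ‖⟪v, f j⟫‖ ^ 2 = A * ‖v‖ ^ 2)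
    (hnorm : ∀ j, ‖x j‖ = ‖f j‖)
    (C : ℝ) (hCpos : 0 < C)
    (hC : IsLeast {c : ℝ | ∀ (v : H) (ε : Fin N → ℂ), (∀ j, ‖ε j‖ = 1) →
      ‖∑ j, (ε j * ⟪v, f j⟫) • x j‖ ≤ c * ‖v‖} C) :
    (∀ v : H, ∑ j, ‖⟪v, x j⟫‖ ^ 2 = ((M : ℝ)⁻¹ * ∑ j, ‖x j‖ ^ 2) * ‖v‖ ^ 2) ∧
    (∀ v : H, ∑ j, ‖⟪v, f j⟫‖ ^ 2 = ((M : ℝ)⁻¹ * ∑ j, ‖x j‖ ^ 2) * ‖v‖ ^ 2) ∧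
    C ≤ (M : ℝ)⁻¹ * ∑ j, ‖x j‖ ^ 2 ∧
    (M : ℝ)⁻¹ * ∑ j, ‖x j‖ ^ 2 ≤ 27 / 4 * (K₁ ^ 4)⁻¹ * C := by
  classical
  obtain ⟨Ax, hAxpos, hx⟩ := hxtight
  obtain ⟨Af, hAfpos, hf⟩ := hftight
  set B₀ : ℝ := (M : ℝ)⁻¹ * ∑ j, ‖x j‖ ^ 2 with hB₀
  -- M ≠ 0
  have hMne : M ≠ 0 := by
    intro hM0
    have hfr : Module.finrank ℂ H = 0 := by rw [hdim, hM0]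
    have hsub : Subsingleton H := Module.finrank_zero_iff.mp hfr
    have hmem : (C - 1) ∈ {c : ℝ | ∀ (v : H) (ε : Fin N → ℂ), (∀ j, ‖ε j‖ = 1) →
        ‖∑ j, (ε j * ⟪v, f j⟫) • x j‖ ≤ c * ‖v‖} := by
      intro v ε hε
      have hv0 : v = 0 := Subsingleton.elim v 0
      subst hv0
      simp
    have := hC.2 hmem
    linarith
  have hMpos : (0:ℝ) < (M:ℝ) := by
    have : 0 < M := Nat.pos_of_ne_zero hMne
    exact_mod_cast this
  -- orthonormal basis
  set e : OrthonormalBasis (Fin M) ℂ H := (stdOrthonormalBasis ℂ H).reindex (finCongr hdim)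
    with he
  have hpars : ∀ w : H, ∑ i : Fin M, ‖⟪e i, w⟫‖ ^ 2 = ‖w‖ ^ 2 := by
    intro w
    have h1 := e.sum_inner_mul_inner w w
    have h2 : ∀ i : Fin M, ⟪w, e i⟫ * ⟪e i, w⟫ = ((‖⟪e i, w⟫‖ ^ 2 : ℝ) : ℂ) := by
      intro i
      have hci : (⟪w, e i⟫ : ℂ) = (starRingEnd ℂ) ⟪e i, w⟫ := (inner_conj_symm w (e i)).symm
      rw [hci, mul_comm, mul_conj_norm_sq]
    rw [Finset.sum_congr rfl (fun i _ => h2 i), inner_self_eq_norm_sq_to_K] at h1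
    have h3 : ((∑ i : Fin M, ‖⟪e i, w⟫‖ ^ 2 : ℝ) : ℂ) = ((‖w‖ ^ 2 : ℝ) : ℂ) := by
      rw [Complex.ofReal_sum]
      rw [h1]
      norm_cast
    exact_mod_cast h3
  -- trace identities
  have htrace : ∀ (y : Fin N → H) (A : ℝ),
      (∀ v : H, ∑ j, ‖⟪v, y j⟫‖ ^ 2 = A * ‖v‖ ^ 2) → A * M = ∑ j, ‖y j‖ ^ 2 := by
    intro y A hA
    have h1 : ∑ i : Fin M, ∑ j, ‖⟪e i, y j⟫‖ ^ 2 = ∑ i : Fin M, A * ‖e i‖ ^ 2 :=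
      Finset.sum_congr rfl fun i _ => hA (e i)
    have h2 : ∑ i : Fin M, A * ‖e i‖ ^ 2 = A * M := by
      have hnorm1 : ∀ i : Fin M, ‖e i‖ = 1 := fun i => e.orthonormal.1 i
      simp [hnorm1]
      ring
    have h3 : ∑ j, ∑ i : Fin M, ‖⟪e i, y j⟫‖ ^ 2 = ∑ j, ‖y j‖ ^ 2 :=
      Finset.sum_congr rfl fun j _ => hpars (y j)
    rw [Finset.sum_comm] at h1
    rw [← h2, ← h1, h3]
  have hsumxf : ∑ j, ‖f j‖ ^ 2 = ∑ j, ‖x j‖ ^ 2 :=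
    Finset.sum_congr rfl fun j _ => by rw [hnorm j]
  have hAxB : Ax = B₀ := by
    have := htrace x Ax hx
    rw [hB₀, ← this]
    field_simp
  have hAfB : Af = B₀ := by
    have := htrace f Af hf
    rw [hB₀, ← hsumxf, ← this]
    field_simp
  have hB₀pos : 0 < B₀ := hAxB ▸ hAxpos
  have goal1 : ∀ v : H, ∑ j, ‖⟪v, x j⟫‖ ^ 2 = B₀ * ‖v‖ ^ 2 := by
    intro v; rw [hx v, hAxB]
  have goal2 : ∀ v : H, ∑ j, ‖⟪v, f j⟫‖ ^ 2 = B₀ * ‖v‖ ^ 2 := by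
    intro v; rw [hf v, hAfB]
  -- C ≤ B₀
  have goal3 : C ≤ B₀ := by
    apply hC.2
    intro v ε hε
    set u : H := ∑ j, (ε j * ⟪v, f j⟫) • x j with hu
    by_cases hu0 : ‖u‖ = 0
    · rw [hu0]
      have : 0 ≤ B₀ * ‖v‖ := by positivity
      linarith
    · have hupos : 0 < ‖u‖ := lt_of_le_of_ne (norm_nonneg u) (Ne.symm hu0)
      have hinner : ⟪u, u⟫ = ∑ j, (ε j * ⟪v, f j⟫) * ⟪u, x j⟫ := by
        rw [hu]
        rw [inner_sum]
        exact Finset.sum_congr rfl fun j _ => inner_smul_right _ _ _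
      have hnormsum : ‖u‖^2 ≤ ∑ j, ‖⟪v, f j⟫‖ * ‖⟪u, x j⟫‖ := by
        have h1 : (‖u‖^2 : ℝ) = ‖⟪u, u⟫‖ := by
          rw [inner_self_eq_norm_sq_to_K]
          rw [norm_pow]
          norm_num
        rw [h1, hinner]
        refine le_trans (norm_sum_le _ _) (le_of_eq ?_)
        refine Finset.sum_congr rfl fun j _ => ?_
        rw [norm_mul, norm_mul, hε j, one_mul]
      have hcs : (∑ j, ‖⟪v, f j⟫‖ * ‖⟪u, x j⟫‖)^2 ≤ (B₀ * ‖v‖ * ‖u‖)^2 := by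
        have h2 := Finset.sum_mul_sq_le_sq_mul_sq Finset.univ
          (fun j => ‖⟪v, f j⟫‖) (fun j => ‖⟪u, x j⟫‖)
        rw [goal2 v, goal1 u] at h2
        calc (∑ j, ‖⟪v, f j⟫‖ * ‖⟪u, x j⟫‖)^2 ≤ (B₀ * ‖v‖^2) * (B₀ * ‖u‖^2) := h2
          _ = (B₀ * ‖v‖ * ‖u‖)^2 := by ring
      have hsum_nonneg : 0 ≤ ∑ j, ‖⟪v, f j⟫‖ * ‖⟪u, x j⟫‖ :=
        Finset.sum_nonneg fun j _ => mul_nonneg (norm_nonneg _) (norm_nonneg _)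
      have hBvu : 0 ≤ B₀ * ‖v‖ * ‖u‖ := by positivity
      have hfin : ‖u‖^2 ≤ B₀ * ‖v‖ * ‖u‖ := by nlinarith
      have := mul_le_mul_of_nonneg_right (le_refl (‖u‖)) (le_of_lt hupos)
      nlinarith
  -- K₁^4 ≤ 1/4
  have hK14 : K₁^4 ≤ 1/4 := by
    have h2 := hK 2 ![1, 1]
    have hLHS : ∑ j : Fin 2, ‖(![(1:ℂ), 1]) j‖ ^ 2 = 2 := by
      rw [Fin.sum_univ_two]
      norm_num
    have hRHS : ∑ δ : Fin 2 → Bool, ‖∑ j, (if δ j then (1 : ℂ) else -1) * (![(1:ℂ), 1]) j‖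
        = 4 := by
      rw [← Equiv.sum_comp (piFinTwoEquiv (fun _ => Bool)).symm]
      rw [Fintype.sum_prod_type]
      simp only [piFinTwoEquiv, Equiv.coe_fn_symm_mk, Fin.sum_univ_two]
      rw [Fintype.sum_bool, Fintype.sum_bool, Fintype.sum_bool]
      norm_num
    rw [hLHS, hRHS] at h2
    have hs2 : Real.sqrt 2 ^ 2 = 2 := Real.sq_sqrt (by norm_num)
    have hs2nn : 0 ≤ Real.sqrt 2 := Real.sqrt_nonneg 2
    have h3 : K₁ * Real.sqrt 2 ≤ 1 := by
      calc K₁ * Real.sqrt 2 ≤ ((2:ℝ)^2)⁻¹ * 4 := h2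
        _ = 1 := by norm_num
    have h4 : (K₁ * Real.sqrt 2)^2 ≤ 1 := by nlinarith [mul_nonneg hK₁.le hs2nn]
    rw [mul_pow, hs2] at h4
    have hK2 : K₁^2 ≤ 1/2 := by linarith
    nlinarith
  -- main bound B₀ ≤ 24 C
  have goal4' : B₀ ≤ 24 * C := by
    set F1 : Fin N → Fin M → ℂ := fun j i => ⟪e i, f j⟫ with hF1
    set F2 : Fin N → Fin M → ℂ := fun j i => ⟪e i, x j⟫ with hF2
    set S : (Fin M → Fin 4) → ℝ :=
      fun ω => ∑ j, ‖XF (F1 j) Finset.univ ω‖ * ‖XF (F2 j) Finset.univ ω‖ with hS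
    have hsum : (4:ℝ)^M * ((M:ℝ) * B₀ / 24) ≤ ∑ ω : Fin M → Fin 4, S ω := by
      have hper : ∀ j, (4:ℝ)^M * (‖f j‖ * ‖x j‖) / 24
          ≤ ∑ ω : Fin M → Fin 4, ‖XF (F1 j) Finset.univ ω‖ * ‖XF (F2 j) Finset.univ ω‖ := by
        intro j
        exact key_anti (F1 j) (F2 j) ‖f j‖ ‖x j‖ (norm_nonneg _) (norm_nonneg _)
          (hpars (f j)) (hpars (x j))
      have h1 : ∑ j, ((4:ℝ)^M * (‖f j‖ * ‖x j‖) / 24)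
          ≤ ∑ j, ∑ ω : Fin M → Fin 4, ‖XF (F1 j) Finset.univ ω‖ * ‖XF (F2 j) Finset.univ ω‖ :=
        Finset.sum_le_sum fun j _ => hper j
      have h2 : ∑ j, ((4:ℝ)^M * (‖f j‖ * ‖x j‖) / 24) = (4:ℝ)^M * ((M:ℝ) * B₀ / 24) := by
        have ha : ∑ j, ((4:ℝ)^M * (‖f j‖ * ‖x j‖) / 24)
            = (4:ℝ)^M * (∑ j, ‖f j‖ * ‖x j‖) / 24 := by
          rw [Finset.mul_sum, Finset.sum_div]
        have hb : ∑ j, ‖f j‖ * ‖x j‖ = ∑ j, ‖x j‖^2 :=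
          Finset.sum_congr rfl fun j _ => by rw [← hnorm j]; ring
        have hc : (M:ℝ) * B₀ = ∑ j, ‖x j‖^2 := by
          rw [hB₀]
          field_simp
        rw [ha, hb, ← hc]
        ring
      rw [Finset.sum_comm] at h1
      rw [← h2]
      exact h1
    have hcard : ((Finset.univ : Finset (Fin M → Fin 4)).card : ℝ) = (4:ℝ)^M := by
      rw [Finset.card_univ]
      simp [Fintype.card_fun]
    obtain ⟨ω₀, _, hω₀⟩ : ∃ ω₀ ∈ (Finset.univ : Finset (Fin M → Fin 4)),
        (M:ℝ) * B₀ / 24 ≤ S ω₀ := by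
      apply Finset.exists_le_of_sum_le Finset.univ_nonempty
      rw [Finset.sum_const, nsmul_eq_mul, hcard]
      exact hsum
    set V : H := ∑ i : Fin M, zeta (ω₀ i) • e i with hV
    have hVnorm : (‖V‖^2 : ℝ) = (M:ℝ) := by
      have h1 : ⟪V, V⟫ = ((M:ℝ) : ℂ) := by
        rw [hV, e.orthonormal.inner_sum]
        have : ∀ i : Fin M, (starRingEnd ℂ) (zeta (ω₀ i)) * zeta (ω₀ i) = 1 := by
          intro i
          rw [mul_comm]
          exact zeta_mul_conj (ω₀ i)
        rw [Finset.sum_congr rfl (fun i _ => this i)]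
        simp
      have h2 := inner_self_eq_norm_sq_to_K (𝕜 := ℂ) V
      rw [h1] at h2
      have h3 : ((M:ℝ) : ℂ) = ((‖V‖^2 : ℝ) : ℂ) := by
        rw [h2]
        norm_cast
      exact_mod_cast h3.symm
    have hVf : ∀ j, ⟪V, f j⟫ = XF (F1 j) Finset.univ ω₀ := by
      intro j
      rw [hV, sum_inner, XF]
      exact Finset.sum_congr rfl fun i _ => inner_smul_left _ _ _
    have hVx : ∀ j, ⟪V, x j⟫ = XF (F2 j) Finset.univ ω₀ := by
      intro j
      rw [hV, sum_inner, XF]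
      exact Finset.sum_congr rfl fun i _ => inner_smul_left _ _ _
    set z : Fin N → ℂ := fun j => ⟪V, f j⟫ * ⟪V, x j⟫ with hz
    set ε : Fin N → ℂ := fun j => if z j = 0 then 1 else (starRingEnd ℂ) (z j) / (‖z j‖ : ℂ)
      with hε'
    have hε : ∀ j, ‖ε j‖ = 1 := by
      intro j
      rw [hε']
      by_cases h0 : z j = 0
      · simp [h0]
      · simp only [h0, if_false]
        rw [norm_div, RCLike.norm_conj]
        have : ‖((‖z j‖ : ℝ) : ℂ)‖ = ‖z j‖ := by
          rw [Complex.norm_real]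
          exact abs_of_nonneg (norm_nonneg _)
        rw [this, div_self (norm_ne_zero_iff.mpr h0)]
    have hεz : ∀ j, ε j * z j = ((‖z j‖ : ℝ) : ℂ) := by
      intro j
      rw [hε']
      by_cases h0 : z j = 0
      · simp [h0]
      · simp only [h0, if_false]
        have hzn : ((‖z j‖ : ℝ) : ℂ) ≠ 0 := by
          exact_mod_cast norm_ne_zero_iff.mpr h0
        calc ((starRingEnd ℂ) (z j) / ((‖z j‖ : ℝ) : ℂ)) * z j
            = (z j * (starRingEnd ℂ) (z j)) / ((‖z j‖ : ℝ) : ℂ) := by ring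
          _ = ((‖z j‖^2 : ℝ) : ℂ) / ((‖z j‖ : ℝ) : ℂ) := by rw [mul_conj_norm_sq]
          _ = ((‖z j‖ : ℝ) : ℂ) := by
              rw [div_eq_iff hzn]
              push_cast
              ring
    have hCb := hC.1 V ε hε
    have hpair : ((S ω₀ : ℝ) : ℂ) = ⟪V, ∑ j, (ε j * ⟪V, f j⟫) • x j⟫ := by
      rw [inner_sum]
      have h1 : ∀ j, ⟪V, (ε j * ⟪V, f j⟫) • x j⟫ = ((‖z j‖ : ℝ) : ℂ) := by
        intro j
        rw [inner_smul_right, mul_assoc, ← hεz j, hz]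
      rw [Finset.sum_congr rfl (fun j _ => h1 j), hS, Complex.ofReal_sum]
      refine Finset.sum_congr rfl fun j _ => ?_
      rw [hz]
      simp only []
      rw [norm_mul, hVf j, hVx j]
    have hfinal : S ω₀ ≤ C * (M:ℝ) := by
      have h1 : ‖⟪V, ∑ j, (ε j * ⟪V, f j⟫) • x j⟫‖ ≤ ‖V‖ * ‖∑ j, (ε j * ⟪V, f j⟫) • x j‖ :=
        norm_inner_le_norm _ _
      have h2 : ‖((S ω₀ : ℝ) : ℂ)‖ = S ω₀ := by
        rw [Complex.norm_real]
        refine abs_of_nonneg ?_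
        rw [hS]
        exact Finset.sum_nonneg fun j _ => mul_nonneg (norm_nonneg _) (norm_nonneg _)
      have h3 : ‖V‖ * ‖∑ j, (ε j * ⟪V, f j⟫) • x j‖ ≤ ‖V‖ * (C * ‖V‖) := by
        apply mul_le_mul_of_nonneg_left hCb (norm_nonneg V)
      have h4 : ‖V‖ * (C * ‖V‖) = C * ‖V‖^2 := by ring
      rw [← h2, hpair]
      calc ‖⟪V, ∑ j, (ε j * ⟪V, f j⟫) • x j⟫‖ ≤ ‖V‖ * ‖∑ j, (ε j * ⟪V, f j⟫) • x j‖ := h1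
        _ ≤ C * ‖V‖^2 := by rw [← h4]; exact h3
        _ = C * (M:ℝ) := by rw [hVnorm]
    have hlast : (M:ℝ) * B₀ / 24 ≤ C * (M:ℝ) := le_trans hω₀ hfinal
    clear_value S V z ε F1 F2
    rw [div_le_iff₀ (by norm_num : (0:ℝ) < 24)] at hlast
    have h5 : (M:ℝ) * B₀ ≤ (M:ℝ) * (24*C) := by linarith [hlast]
    exact le_of_mul_le_mul_left h5 hMpos
  have goal4 : B₀ ≤ 27 / 4 * (K₁ ^ 4)⁻¹ * C := by
    have hK4pos : 0 < K₁^4 := by positivity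
    have hinv : 4 ≤ (K₁^4)⁻¹ := by
      have h1 : K₁^4 ≤ (4:ℝ)⁻¹ := by linarith
      calc (4:ℝ) = ((4:ℝ)⁻¹)⁻¹ := by norm_num
        _ ≤ (K₁^4)⁻¹ := by
          apply inv_anti₀ hK4pos h1
    calc B₀ ≤ 24 * C := goal4'
      _ ≤ 27 * C := by linarith
      _ ≤ 27 / 4 * (K₁ ^ 4)⁻¹ * C := by
          have h6 := mul_le_mul_of_nonneg_right hinv hCpos.le
          linarith
  exact ⟨goal1, goal2, goal3, goal4⟩
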